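/- For matrices W_1, W_2 with W_2 W_1 = M and positive semidefinite B_1, B_2, one has ‖B_1 W_2‖_F² + ‖W_1 B_2‖_F² ≥ 2‖B_1 M B_2‖_*. -/

import Mathlib

open Matrix Finset

lemma dot_sum_left {n ι : Type*} [Fintype n] (s : Finset ι) (f : ι → n → ℝ) (a : n → ℝ) :
    (∑ i ∈ s, f i) ⬝ᵥ a = ∑ i ∈ s, f i ⬝ᵥ a := by
  simp [dotProduct, Finset.sum_mul, Finset.sum_comm (s := s)]

lemma dot_sum_right {n ι : Type*} [Fintype n] (s : Finset ι) (f : ι → n → ℝ) (a : n → ℝ) :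
    a ⬝ᵥ (∑ i ∈ s, f i) = ∑ i ∈ s, a ⬝ᵥ f i := by
  simp [dotProduct, Finset.mul_sum, Finset.sum_comm (s := s)]

lemma dot_self_nonneg' {n : Type*} [Fintype n] (p : n → ℝ) : 0 ≤ p ⬝ᵥ p :=
  Finset.sum_nonneg fun k _ => mul_self_nonneg _

lemma dot_self_eq_sum_sq {n : Type*} [Fintype n] (p : n → ℝ) : p ⬝ᵥ p = ∑ k, p k ^ 2 := by
  simp [dotProduct, pow_two]

lemma two_dot_le {n : Type*} [Fintype n] (p q : n → ℝ) :
    2 * (p ⬝ᵥ q) ≤ p ⬝ᵥ p + q ⬝ᵥ q := by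
  have key := dot_self_nonneg' (p - q)
  have : (p - q) ⬝ᵥ (p - q) = p ⬝ᵥ p - 2 * (p ⬝ᵥ q) + q ⬝ᵥ q := by
    rw [sub_dotProduct, dotProduct_sub, dotProduct_sub, dotProduct_comm q p]; ring
  linarith [key.trans_eq this]

lemma bessel {n ι : Type*} [Fintype n] [DecidableEq ι] (s : Finset ι)
    (u : ι → n → ℝ) (h : ∀ i ∈ s, ∀ j ∈ s, u i ⬝ᵥ u j = if i = j then 1 else 0)
    (a : n → ℝ) : ∑ i ∈ s, (a ⬝ᵥ u i) ^ 2 ≤ a ⬝ᵥ a := by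
  set P : n → ℝ := ∑ i ∈ s, (a ⬝ᵥ u i) • u i with hP
  have key : (0:ℝ) ≤ (a - P) ⬝ᵥ (a - P) := dot_self_nonneg' _
  have haP : a ⬝ᵥ P = ∑ i ∈ s, (a ⬝ᵥ u i) ^ 2 := by
    rw [hP, dot_sum_right]
    exact Finset.sum_congr rfl fun i _ => by rw [dotProduct_smul, smul_eq_mul, pow_two]
  have hPa : P ⬝ᵥ a = ∑ i ∈ s, (a ⬝ᵥ u i) ^ 2 := by rw [dotProduct_comm]; exact haP
  have hPP : P ⬝ᵥ P = ∑ i ∈ s, (a ⬝ᵥ u i) ^ 2 := by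
    rw [hP, dot_sum_left]
    refine Finset.sum_congr rfl fun i hi => ?_
    rw [dot_sum_right]
    have step : ∀ j ∈ s, ((a ⬝ᵥ u i) • u i) ⬝ᵥ ((a ⬝ᵥ u j) • u j)
        = if j = i then (a ⬝ᵥ u i) ^ 2 else 0 := by
      intro j hj
      rw [smul_dotProduct, dotProduct_smul, h i hi j hj]
      by_cases hij : i = j
      · simp [hij, pow_two]
      · simp [hij, Ne.symm hij]
    rw [Finset.sum_congr rfl step, Finset.sum_ite_eq' s i, if_pos hi]
  have expand : (a - P) ⬝ᵥ (a - P) = a ⬝ᵥ a - ∑ i ∈ s, (a ⬝ᵥ u i) ^ 2 := by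
    rw [sub_dotProduct, dotProduct_sub, dotProduct_sub, haP, hPa, hPP]; ring
  linarith [key.trans_eq expand]

noncomputable def frobNorm {m n : Type*} [Fintype m] [Fintype n] (M : Matrix m n ℝ) : ℝ :=
  Real.sqrt (∑ i, ∑ j, (M i j) ^ 2)

noncomputable def nuclearNorm {m n : Type*} [Fintype m] [Fintype n] [DecidableEq n]
    (M : Matrix m n ℝ) : ℝ :=
  ∑ i, Real.sqrt ((show (Mᵀ * M).IsHermitian by
    simp [IsHermitian, conjTranspose_eq_transpose_of_trivial]).eigenvalues i)

/-- ‖B₁W₂‖_F² + ‖W₁B₂‖_F² ≥ 2‖B₁ M B₂‖_* when W₂W₁ = M and B₁, B₂ are PSD. -/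
theorem frob_sq_add_ge_two_nuclear {d0 d1 d2 : ℕ}
    (W1 : Matrix (Fin d1) (Fin d0) ℝ) (W2 : Matrix (Fin d2) (Fin d1) ℝ)
    (M : Matrix (Fin d2) (Fin d0) ℝ) (hM : W2 * W1 = M)
    (B1 : Matrix (Fin d2) (Fin d2) ℝ) (hB1 : B1.PosSemidef)
    (B2 : Matrix (Fin d0) (Fin d0) ℝ) (hB2 : B2.PosSemidef) :
    2 * nuclearNorm (B1 * M * B2)
      ≤ frobNorm (B1 * W2) ^ 2 + frobNorm (W1 * B2) ^ 2 := by
  classical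
  set X := B1 * W2 with hX
  set Y := W1 * B2 with hY
  set C := B1 * M * B2 with hCdef
  have hC : C = X * Y := by
    rw [hCdef, hX, hY, ← hM, Matrix.mul_assoc, Matrix.mul_assoc, Matrix.mul_assoc]
  have hH := Matrix.isHermitian_conjTranspose_mul_self C
  set lam : Fin d0 → ℝ := hH.eigenvalues with hlamdef
  set v : Fin d0 → Fin d0 → ℝ := fun i => ⇑(hH.eigenvectorBasis i) with hvdef
  have hlam0 : ∀ i, 0 ≤ lam i := Matrix.eigenvalues_conjTranspose_mul_self_nonneg C
  have hCH : Cᴴ = Cᵀ := by ext i j; simp [Matrix.conjTranspose_apply]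
  have hvC : ∀ j, (Cᴴ * C) *ᵥ v j = lam j • v j := fun j => hH.mulVec_eigenvectorBasis j
  have hvv : ∀ i j, v i ⬝ᵥ v j = if i = j then 1 else 0 := by
    intro i j
    have := orthonormal_iff_ite.mp hH.eigenvectorBasis.orthonormal i j
    simpa [hvdef, PiLp.inner_apply, dotProduct, RCLike.inner_apply, mul_comm] using this
  have hCvv : ∀ i j, (C *ᵥ v i) ⬝ᵥ (C *ᵥ v j) = lam j * (if i = j then 1 else 0) := by
    intro i j
    have h1 : v i ⬝ᵥ ((Cᴴ * C) *ᵥ v j) = (C *ᵥ v i) ⬝ᵥ (C *ᵥ v j) := by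
      rw [← Matrix.mulVec_mulVec, Matrix.dotProduct_mulVec, hCH, Matrix.vecMul_transpose]
    rw [← h1, hvC j, dotProduct_smul, smul_eq_mul, hvv i j]
  set sig : Fin d0 → ℝ := fun i => Real.sqrt (lam i) with hsigdef
  set s : Finset (Fin d0) := Finset.univ.filter (fun i => lam i ≠ 0) with hsdef
  have hnuc : nuclearNorm C = ∑ i ∈ s, sig i := by
    rw [nuclearNorm, hsdef]
    rw [Finset.sum_filter_of_ne]
    · rfl
    intro x _ hx hlx
    exact hx (by rw [hsigdef] at *; simp only at hlx ⊢; rw [hlx, Real.sqrt_zero])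
  set u : Fin d0 → Fin d2 → ℝ := fun i => (sig i)⁻¹ • (C *ᵥ v i) with hudef
  have hmem : ∀ i ∈ s, 0 < lam i := by
    intro i hi
    rcases Finset.mem_filter.mp hi with ⟨_, hne⟩
    exact lt_of_le_of_ne (hlam0 i) (Ne.symm hne)
  have hsigpos : ∀ i ∈ s, 0 < sig i := fun i hi => Real.sqrt_pos.mpr (hmem i hi)
  have hsigsq : ∀ i, sig i ^ 2 = lam i := fun i => Real.sq_sqrt (hlam0 i)
  have huu : ∀ i ∈ s, ∀ j ∈ s, u i ⬝ᵥ u j = if i = j then 1 else 0 := by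
    intro i hi j hj
    rw [hudef]
    simp only
    rw [smul_dotProduct, dotProduct_smul, hCvv i j, smul_eq_mul, smul_eq_mul]
    have hs : sig i ≠ 0 := (hsigpos i hi).ne'
    by_cases hij : i = j
    · subst hij
      rw [if_pos rfl, mul_one, ← hsigsq i, sq]
      field_simp
    · simp [hij]
  have hsig_inner : ∀ i ∈ s, sig i = (Xᵀ *ᵥ u i) ⬝ᵥ (Y *ᵥ v i) := by
    intro i hi
    have h1 : (Xᵀ *ᵥ u i) ⬝ᵥ (Y *ᵥ v i) = u i ⬝ᵥ (C *ᵥ v i) := by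
      rw [Matrix.mulVec_transpose, ← Matrix.dotProduct_mulVec, Matrix.mulVec_mulVec, ← hC]
    rw [h1, hudef]
    simp only
    rw [smul_dotProduct, hCvv i i, if_pos rfl, mul_one, smul_eq_mul]
    have hs : sig i ≠ 0 := (hsigpos i hi).ne'
    rw [← hsigsq i, sq, inv_mul_cancel_left₀ hs]
  have hstep : ∀ i ∈ s, 2 * sig i
      ≤ (Xᵀ *ᵥ u i) ⬝ᵥ (Xᵀ *ᵥ u i) + (Y *ᵥ v i) ⬝ᵥ (Y *ᵥ v i) := by
    intro i hi
    rw [hsig_inner i hi]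
    exact two_dot_le _ _
  have hfX : frobNorm X ^ 2 = ∑ i, ∑ j, X i j ^ 2 := Real.sq_sqrt (by positivity)
  have hfY : frobNorm Y ^ 2 = ∑ i, ∑ j, Y i j ^ 2 := Real.sq_sqrt (by positivity)
  have hA : ∑ i ∈ s, (Xᵀ *ᵥ u i) ⬝ᵥ (Xᵀ *ᵥ u i) ≤ frobNorm X ^ 2 := by
    have h1 : ∀ i, (Xᵀ *ᵥ u i) ⬝ᵥ (Xᵀ *ᵥ u i) = ∑ j, (Xᵀ j ⬝ᵥ u i) ^ 2 := by
      intro i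
      rw [dot_self_eq_sum_sq]
      exact Finset.sum_congr rfl fun j _ => rfl
    calc ∑ i ∈ s, (Xᵀ *ᵥ u i) ⬝ᵥ (Xᵀ *ᵥ u i)
        = ∑ j, ∑ i ∈ s, (Xᵀ j ⬝ᵥ u i) ^ 2 := by
          rw [Finset.sum_congr rfl fun i _ => h1 i]; exact Finset.sum_comm
      _ ≤ ∑ j, Xᵀ j ⬝ᵥ Xᵀ j := Finset.sum_le_sum fun j _ => bessel s u huu _
      _ = frobNorm X ^ 2 := by
          rw [hfX, Finset.sum_comm]
          exact Finset.sum_congr rfl fun j _ => by rw [dot_self_eq_sum_sq]; rfl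
  have hB : ∑ i ∈ s, (Y *ᵥ v i) ⬝ᵥ (Y *ᵥ v i) ≤ frobNorm Y ^ 2 := by
    have h1 : ∀ i, (Y *ᵥ v i) ⬝ᵥ (Y *ᵥ v i) = ∑ j, (Y j ⬝ᵥ v i) ^ 2 := by
      intro i
      rw [dot_self_eq_sum_sq]
      exact Finset.sum_congr rfl fun j _ => rfl
    have hvv' : ∀ i ∈ (Finset.univ : Finset (Fin d0)), ∀ j ∈ (Finset.univ : Finset (Fin d0)),
        v i ⬝ᵥ v j = if i = j then 1 else 0 := fun i _ j _ => hvv i j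
    calc ∑ i ∈ s, (Y *ᵥ v i) ⬝ᵥ (Y *ᵥ v i)
        ≤ ∑ i, (Y *ᵥ v i) ⬝ᵥ (Y *ᵥ v i) :=
          Finset.sum_le_sum_of_subset_of_nonneg (Finset.subset_univ s)
            (fun i _ _ => dot_self_nonneg' _)
      _ = ∑ j, ∑ i, (Y j ⬝ᵥ v i) ^ 2 := by
          rw [Finset.sum_congr rfl fun i _ => h1 i]; exact Finset.sum_comm
      _ ≤ ∑ j, Y j ⬝ᵥ Y j := Finset.sum_le_sum fun j _ => bessel Finset.univ v hvv' _
      _ = frobNorm Y ^ 2 := by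
          rw [hfY]
          exact Finset.sum_congr rfl fun j _ => by rw [dot_self_eq_sum_sq]
  calc 2 * nuclearNorm C = ∑ i ∈ s, 2 * sig i := by rw [hnuc, Finset.mul_sum]
    _ ≤ ∑ i ∈ s, ((Xᵀ *ᵥ u i) ⬝ᵥ (Xᵀ *ᵥ u i) + (Y *ᵥ v i) ⬝ᵥ (Y *ᵥ v i)) :=
        Finset.sum_le_sum hstep
    _ = (∑ i ∈ s, (Xᵀ *ᵥ u i) ⬝ᵥ (Xᵀ *ᵥ u i)) + ∑ i ∈ s, (Y *ᵥ v i) ⬝ᵥ (Y *ᵥ v i) :=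
        Finset.sum_add_distrib
    _ ≤ frobNorm X ^ 2 + frobNorm Y ^ 2 := add_le_add hA hB
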